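/- Let F, f_s : ℝ^d → ℝ be L-smooth, F μ-PL with global minimum F(x_*), and suppose for all x: ‖∇F(x)‖² ≤ V₁, V₂ ≤ ‖∇f_s(x)‖² ≤ V₁ with 0 < V₂ ≤ V₁, and ‖∇f_s(x) - ∇F(x)‖² ≤ V₃. Let 0 < γ < min(1, 1/L), α > 0, ρ ≥ α√γ·V₁/(2μV₂) with 2μρV₂/V₁ ≤ 1. Suppose each update satisfies x_t = x_{t-1} - γg_t where ‖g_t‖² = ‖∇f_s(x_{τ_t})‖², γ⟨∇f_s(x_{τ_t}), g_t⟩ - ρ‖g_t‖² ≥ -γε for ε ≥ 0, and t - 1 - τ_t ≤ k. Then F(x_T) - F(x_*) ≤ (1 - α√γ)^T (F(x_0) - F(x_*)) + (√γ/α)·C·(k²V₁ + V₃ + ε + V₁) for an absolute constant C depending only on L. -/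

import Mathlib

open RealInnerProductSpace

set_option maxHeartbeats 1000000 in
theorem stmt9 (L : ℝ) (hL : 0 < L) :
    ∃ C : ℝ, 0 < C ∧
      ∀ (d : ℕ) (F fs : EuclideanSpace ℝ (Fin d) → ℝ)
        (xstar : EuclideanSpace ℝ (Fin d))
        (μ γ α ρ ε V₁ V₂ V₃ : ℝ) (k T : ℕ)
        (x g : ℕ → EuclideanSpace ℝ (Fin d)) (τ : ℕ → ℕ),
        Differentiable ℝ F → Differentiable ℝ fs →
        0 < μ →
        (∀ y z, F z - F y ≤ ⟪gradient F y, z - y⟫ + L / 2 * ‖z - y‖ ^ 2) →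
        (∀ y z, fs z - fs y ≤ ⟪gradient fs y, z - y⟫ + L / 2 * ‖z - y‖ ^ 2) →
        (∀ y, F xstar ≤ F y) →
        (∀ y, F y - F xstar ≤ 1 / (2 * μ) * ‖gradient F y‖ ^ 2) →
        (∀ y, ‖gradient F y‖ ^ 2 ≤ V₁) →
        (∀ y, V₂ ≤ ‖gradient fs y‖ ^ 2) →
        (∀ y, ‖gradient fs y‖ ^ 2 ≤ V₁) →
        0 < V₂ → V₂ ≤ V₁ →
        (∀ y, ‖gradient fs y - gradient F y‖ ^ 2 ≤ V₃) →
        0 < γ → γ < min 1 (1 / L) →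
        0 < α →
        α * Real.sqrt γ * V₁ / (2 * μ * V₂) ≤ ρ →
        2 * μ * ρ * V₂ / V₁ ≤ 1 →
        0 ≤ ε →
        (∀ t : ℕ, 1 ≤ t → t ≤ T →
          x t = x (t - 1) - γ • g t ∧
          ‖g t‖ ^ 2 = ‖gradient fs (x (τ t))‖ ^ 2 ∧
          γ * ⟪gradient fs (x (τ t)), g t⟫ - ρ * ‖g t‖ ^ 2 ≥ -(γ * ε) ∧
          τ t ≤ t - 1 ∧ (t - 1) - τ t ≤ k) →
        F (x T) - F xstar ≤
          (1 - α * Real.sqrt γ) ^ T * (F (x 0) - F xstar) +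
            Real.sqrt γ / α * C * ((k : ℝ) ^ 2 * V₁ + V₃ + ε + V₁) := by
  refine ⟨3, by norm_num, ?_⟩
  intro d F fs xstar μ γ α ρ ε V₁ V₂ V₃ k T x g τ
    hdF hdfs hμ hsmF hsmfs hmin hPL hGF hfsl hfsu hV₂ hV₂₁ hV₃ hγ hγm hα hρ hρ1 hε hupd
  have hV₁ : 0 < V₁ := lt_of_lt_of_le hV₂ hV₂₁
  have hs : 0 < Real.sqrt γ := Real.sqrt_pos.mpr hγ
  obtain ⟨q, hqdef⟩ : ∃ q : ℝ, q = α * Real.sqrt γ := ⟨_, rfl⟩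
  rw [← hqdef] at hρ ⊢
  have hq : 0 < q := by rw [hqdef]; exact mul_pos hα hs
  have h2μV₂ : 0 < 2 * μ * V₂ := by positivity
  have h1 : q * V₁ ≤ 2 * μ * V₂ * ρ := by
    have h := (div_le_iff₀ h2μV₂).mp hρ
    linarith
  have hρpos : 0 < ρ := by
    have h0 : 0 < q * V₁ / (2 * μ * V₂) := div_pos (mul_pos hq hV₁) h2μV₂
    exact lt_of_lt_of_le h0 hρ
  have h2 : 2 * μ * ρ * V₂ ≤ V₁ := by
    have h := (div_le_one hV₁).mp hρ1
    linarith
  have hq1 : q ≤ 1 := by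
    have h3 : q * V₁ ≤ 1 * V₁ := by linarith
    exact (mul_le_mul_iff_of_pos_right hV₁).mp h3
  obtain ⟨B, hBdef⟩ : ∃ B : ℝ, B = γ * ε + 2 * γ * V₁ + L * γ ^ 2 / 2 * V₁ := ⟨_, rfl⟩
  have hB : 0 ≤ B := by rw [hBdef]; positivity
  have hγsq : Real.sqrt γ * Real.sqrt γ = γ := Real.mul_self_sqrt hγ.le
  have hsV₁ : Real.sqrt V₁ * Real.sqrt V₁ = V₁ := Real.mul_self_sqrt hV₁.le
  -- per-step contraction
  have step : ∀ t : ℕ, 1 ≤ t → t ≤ T →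
      F (x t) - F xstar ≤ (1 - q) * (F (x (t - 1)) - F xstar) + B := by
    intro t ht1 htT
    obtain ⟨hx, hgn, hacc, -, -⟩ := hupd t ht1 htT
    have hsm := hsmF (x (t - 1)) (x t)
    have hdiff : x t - x (t - 1) = -(γ • g t) := by rw [hx]; abel
    rw [hdiff] at hsm
    have hinner : ⟪gradient F (x (t - 1)), -(γ • g t)⟫
        = -(γ * ⟪gradient F (x (t - 1)), g t⟫) := by
      rw [inner_neg_right, real_inner_smul_right]
    have hnorm : ‖-(γ • g t)‖ ^ 2 = γ ^ 2 * ‖g t‖ ^ 2 := by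
      rw [norm_neg, norm_smul, Real.norm_eq_abs, mul_pow, sq_abs]
    rw [hinner, hnorm] at hsm
    have hsplit : γ * ⟪gradient F (x (t - 1)), g t⟫
        = γ * ⟪gradient fs (x (τ t)), g t⟫
          + γ * ⟪gradient F (x (t - 1)) - gradient fs (x (τ t)), g t⟫ := by
      rw [inner_sub_left]; ring
    have hng2 : ‖g t‖ ^ 2 ≤ V₁ := hgn ▸ hfsu _
    have hngl : V₂ ≤ ‖g t‖ ^ 2 := hgn ▸ hfsl _
    have hna : ‖gradient F (x (t - 1))‖ ≤ Real.sqrt V₁ := by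
      rw [← Real.sqrt_sq (norm_nonneg (gradient F (x (t - 1))))]
      exact Real.sqrt_le_sqrt (hGF _)
    have hnb : ‖gradient fs (x (τ t))‖ ≤ Real.sqrt V₁ := by
      rw [← Real.sqrt_sq (norm_nonneg (gradient fs (x (τ t))))]
      exact Real.sqrt_le_sqrt (hfsu _)
    have hng : ‖g t‖ ≤ Real.sqrt V₁ := by
      rw [← Real.sqrt_sq (norm_nonneg (g t))]
      exact Real.sqrt_le_sqrt hng2
    have hcross : ‖gradient F (x (t - 1)) - gradient fs (x (τ t))‖ * ‖g t‖ ≤ 2 * V₁ := by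
      have h3 : ‖gradient F (x (t - 1)) - gradient fs (x (τ t))‖ ≤ 2 * Real.sqrt V₁ :=
        le_trans (norm_sub_le _ _) (by linarith)
      calc ‖gradient F (x (t - 1)) - gradient fs (x (τ t))‖ * ‖g t‖
          ≤ (2 * Real.sqrt V₁) * Real.sqrt V₁ :=
            mul_le_mul h3 hng (norm_nonneg _) (by positivity)
        _ = 2 * V₁ := by rw [mul_assoc, hsV₁]
    have hcross2 : -(γ * ⟪gradient F (x (t - 1)) - gradient fs (x (τ t)), g t⟫)
        ≤ 2 * γ * V₁ := by
      have h4 : -(2 * V₁) ≤ ⟪gradient F (x (t - 1)) - gradient fs (x (τ t)), g t⟫ := by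
        have h5 := abs_real_inner_le_norm (gradient F (x (t - 1)) - gradient fs (x (τ t))) (g t)
        have h6 := neg_abs_le ⟪gradient F (x (t - 1)) - gradient fs (x (τ t)), g t⟫
        linarith
      nlinarith [mul_le_mul_of_nonneg_left h4 hγ.le]
    have hacc' : -(γ * ⟪gradient fs (x (τ t)), g t⟫) ≤ -(ρ * ‖g t‖ ^ 2) + γ * ε := by
      linarith [hacc]
    have e2 : q * (F (x (t - 1)) - F xstar) ≤ ρ * ‖g t‖ ^ 2 := by
      have e1 : F (x (t - 1)) - F xstar ≤ V₁ / (2 * μ) := by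
        have h5 : 1 / (2 * μ) * ‖gradient F (x (t - 1))‖ ^ 2 ≤ 1 / (2 * μ) * V₁ :=
          mul_le_mul_of_nonneg_left (hGF _) (by positivity)
        calc F (x (t - 1)) - F xstar ≤ 1 / (2 * μ) * ‖gradient F (x (t - 1))‖ ^ 2 := hPL _
          _ ≤ 1 / (2 * μ) * V₁ := h5
          _ = V₁ / (2 * μ) := by ring
      have e3 : q * (F (x (t - 1)) - F xstar) ≤ q * (V₁ / (2 * μ)) :=
        mul_le_mul_of_nonneg_left e1 hq.le
      have e4 : q * (V₁ / (2 * μ)) ≤ ρ * V₂ := by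
        rw [show q * (V₁ / (2 * μ)) = q * V₁ / (2 * μ) by ring,
          div_le_iff₀ (by positivity : (0:ℝ) < 2 * μ)]
        linarith
      have e5 : ρ * V₂ ≤ ρ * ‖g t‖ ^ 2 := mul_le_mul_of_nonneg_left hngl hρpos.le
      linarith
    have hLg : L / 2 * (γ ^ 2 * ‖g t‖ ^ 2) ≤ L * γ ^ 2 / 2 * V₁ := by
      nlinarith [mul_le_mul_of_nonneg_left hng2 (by positivity : (0:ℝ) ≤ L * γ ^ 2 / 2)]
    have hsm2 : F (x t) - F (x (t - 1))
        ≤ -(γ * ⟪gradient fs (x (τ t)), g t⟫)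
          - γ * ⟪gradient F (x (t - 1)) - gradient fs (x (τ t)), g t⟫
          + L / 2 * (γ ^ 2 * ‖g t‖ ^ 2) := by
      linarith [hsm, hsplit]
    have hexp : (1 - q) * (F (x (t - 1)) - F xstar)
        = (F (x (t - 1)) - F xstar) - q * (F (x (t - 1)) - F xstar) := by ring
    linarith [hsm2, hcross2, hacc', e2, hLg, hBdef, hexp]
  -- induction
  have main : ∀ n : ℕ, n ≤ T →
      F (x n) - F xstar ≤ (1 - q) ^ n * (F (x 0) - F xstar) + B / q := by
    intro n
    induction n with
    | zero =>
      intro _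
      simp only [pow_zero, one_mul]
      have : 0 ≤ B / q := div_nonneg hB hq.le
      linarith
    | succ n ih =>
      intro hnT
      have hst := step (n + 1) (Nat.le_add_left 1 n) hnT
      simp only [Nat.add_sub_cancel] at hst
      have ihn := ih (Nat.le_of_succ_le hnT)
      have h1q : (0:ℝ) ≤ 1 - q := by linarith
      have hmul : (1 - q) * (F (x n) - F xstar)
          ≤ (1 - q) * ((1 - q) ^ n * (F (x 0) - F xstar) + B / q) :=
        mul_le_mul_of_nonneg_left ihn h1q
      have hq0 : q ≠ 0 := hq.ne'
      have hqB : (1 - q) * ((1 - q) ^ n * (F (x 0) - F xstar) + B / q) + B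
          = (1 - q) ^ (n + 1) * (F (x 0) - F xstar) + B / q := by
        field_simp
        ring
      linarith
  have hfin := main T le_rfl
  have hV₃0 : 0 ≤ V₃ := le_trans (by positivity) (hV₃ 0)
  have hγL : L * γ < 1 := by
    have h7 : γ < 1 / L := lt_of_lt_of_le hγm (min_le_right _ _)
    have := (lt_div_iff₀ hL).mp h7
    linarith
  have hBfin : B / q ≤ Real.sqrt γ / α * 3 * ((k : ℝ) ^ 2 * V₁ + V₃ + ε + V₁) := by
    rw [div_le_iff₀ hq]
    have hkey : Real.sqrt γ / α * 3 * ((k : ℝ) ^ 2 * V₁ + V₃ + ε + V₁) * q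
        = 3 * γ * ((k : ℝ) ^ 2 * V₁ + V₃ + ε + V₁) := by
      rw [hqdef]
      calc Real.sqrt γ / α * 3 * ((k : ℝ) ^ 2 * V₁ + V₃ + ε + V₁) * (α * Real.sqrt γ)
          = Real.sqrt γ * Real.sqrt γ * (α / α) * (3 * ((k : ℝ) ^ 2 * V₁ + V₃ + ε + V₁)) := by
            ring
        _ = 3 * γ * ((k : ℝ) ^ 2 * V₁ + V₃ + ε + V₁) := by
            rw [hγsq, div_self hα.ne']; ring
    rw [hkey, hBdef]
    have hk2 : 0 ≤ (k : ℝ) ^ 2 * V₁ := by positivity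
    nlinarith [mul_nonneg hγ.le hV₃0, mul_nonneg hγ.le hk2, mul_nonneg hγ.le hε,
      mul_pos hγ hV₁, mul_le_mul_of_nonneg_right hγL.le (mul_pos hγ hV₁).le]
  calc F (x T) - F xstar ≤ (1 - q) ^ T * (F (x 0) - F xstar) + B / q := hfin
    _ ≤ (1 - q) ^ T * (F (x 0) - F xstar)
        + Real.sqrt γ / α * 3 * ((k : ℝ) ^ 2 * V₁ + V₃ + ε + V₁) := by linarith
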